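/- arXiv:1408.2220 — 2 statements merged into one kernel-verified Lean document; each statement's English description precedes it below -/
import Mathlib

section
/- For any dimension $d \geq 1$ and any $\delta > 0$, there exists a $\delta$-bracketing cover $\Delta$ of $[0,1)^d$ with cardinality $|\Delta| \leq \frac{1}{2}(2e)^d(\delta^{-1}+1)^d$. -/
open MeasureTheory Set

/-- The anchored box `[0, v) = ∏ i, [0, v i)` in `ℝ^d`. -/
def anchoredBox {d : ℕ} (v : Fin d → ℝ) : Set (Fin d → ℝ) :=
  Set.pi Set.univ fun i => Set.Ico 0 (v i)

lemma volume_anchoredBox {d : ℕ} (v : Fin d → ℝ) (hv : ∀ i, 0 ≤ v i) :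
    volume (anchoredBox v) = ENNReal.ofReal (∏ i, v i) := by
  rw [anchoredBox, volume_pi_pi, ENNReal.ofReal_prod_of_nonneg (fun i _ => hv i)]
  simp [Real.volume_Ico]

lemma volume_anchored_diff {d : ℕ} (v w : Fin d → ℝ) (hv : ∀ i, 0 ≤ v i)
    (hvw : v ≤ w) :
    volume (anchoredBox w \ anchoredBox v)
      = ENNReal.ofReal ((∏ i, w i) - ∏ i, v i) := by
  have hsub : anchoredBox v ⊆ anchoredBox w := by
    apply Set.pi_mono; intro i _; exact Set.Ico_subset_Ico le_rfl (hvw i)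
  have hmv : MeasurableSet (anchoredBox v) :=
    MeasurableSet.univ_pi fun i => measurableSet_Ico
  have hfin : volume (anchoredBox v) ≠ ⊤ := by
    rw [volume_anchoredBox v hv]; exact ENNReal.ofReal_ne_top
  rw [measure_diff hsub hmv.nullMeasurableSet hfin, volume_anchoredBox v hv,
    volume_anchoredBox w (fun i => le_trans (hv i) (hvw i)),
    ENNReal.ofReal_sub _ (Finset.prod_nonneg fun i _ => hv i)]

lemma bern_pow (k : ℕ) (b : ℝ) (hb : 0 < b) :
    b^(k+1) + (k+1) * b^k ≤ (b+1)^(k+1) := by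
  have h0 : (-2:ℝ) ≤ 1/b := by
    have : (0:ℝ) < 1/b := by positivity
    linarith
  have h := one_add_mul_le_pow h0 (k+1)
  have h2 := mul_le_mul_of_nonneg_right h (le_of_lt (pow_pos hb (k+1)))
  have hb' : b ≠ 0 := ne_of_gt hb
  calc b^(k+1) + (k+1)*b^k
      = (1 + ((k:ℝ)+1)*(1/b)) * b^(k+1) := by
        field_simp
        ring
    _ ≤ (1+1/b)^(k+1) * b^(k+1) := by push_cast at h2 ⊢; linarith
    _ = ((1+1/b)*b)^(k+1) := (mul_pow _ _ _).symm
    _ = (b+1)^(k+1) := by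
        congr 1
        field_simp

lemma sum_shift_pow_le (K : ℕ) (c : ℝ) (hc : 0 ≤ c) (n : ℕ) :
    ((K:ℝ)+1) * ∑ j ∈ Finset.range n, (c + j + 1)^K ≤ (c + n + 1)^(K+1) := by
  induction n with
  | zero => simp; positivity
  | succ n ih =>
    rw [Finset.sum_range_succ, mul_add]
    have hb : (0:ℝ) < c + n + 1 := by positivity
    have h := bern_pow K (c + n + 1) hb
    push_cast
    have e : c + ((n:ℝ) + 1) + 1 = c + (n:ℝ) + 1 + 1 := by ring
    rw [e]
    linarith [h, ih]

lemma key_ineq (K : ℕ) (hK : 1 ≤ K) (u : ℝ) (h1 : (K:ℝ) + 1 ≤ u) (h2 : u ≤ (K:ℝ) + 2) :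
    u^(K+1) ≤ 2 * Real.exp 1 * ((K:ℝ)+1) * (u-1)^K := by
  have hK1 : (1:ℝ) ≤ K := by exact_mod_cast hK
  have hu1 : (K:ℝ) ≤ u - 1 := by linarith
  have hupos : (0:ℝ) < u - 1 := by linarith
  have hKpos : (0:ℝ) < K := by linarith
  have hstep : u ≤ (1 + 1/(K:ℝ)) * (u - 1) := by
    rw [add_mul, one_mul, div_mul_eq_mul_div, one_mul]
    have : 1 ≤ (u-1)/(K:ℝ) := (le_div_iff₀ hKpos).mpr (by linarith)
    linarith
  have hpow : u^K ≤ (1+1/(K:ℝ))^K * (u-1)^K := by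
    rw [← mul_pow]
    exact pow_le_pow_left₀ (by linarith) hstep K
  have hexp : (1 + 1/(K:ℝ))^K ≤ Real.exp 1 := by
    have h1e : (1 + 1/(K:ℝ)) ≤ Real.exp (1/K) := by
      have := Real.add_one_le_exp (1/(K:ℝ)); linarith
    calc (1+1/(K:ℝ))^K ≤ (Real.exp (1/K))^K :=
          pow_le_pow_left₀ (by positivity) h1e K
      _ = Real.exp ((K:ℝ) * (1/K)) := by rw [← Real.exp_nat_mul]
      _ = Real.exp 1 := by
          congr 1
          field_simp
  have hpK : (0:ℝ) ≤ (u-1)^K := le_of_lt (pow_pos hupos K)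
  have hup : (0:ℝ) ≤ u := by linarith
  calc u^(K+1) = u * u^K := by ring
    _ ≤ ((K:ℝ)+2) * ((1+1/(K:ℝ))^K * (u-1)^K) := by
        apply mul_le_mul h2 hpow (by positivity) (by linarith)
    _ ≤ ((K:ℝ)+2) * (Real.exp 1 * (u-1)^K) := by
        have := mul_le_mul_of_nonneg_right hexp hpK
        nlinarith
    _ ≤ 2 * Real.exp 1 * ((K:ℝ)+1) * (u-1)^K := by
        have hexp1 : (0:ℝ) < Real.exp 1 := Real.exp_pos 1
        nlinarith [mul_nonneg hexp1.le hpK]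

lemma snoc_mem_Icc {k : ℕ} (v : Fin k → ℝ) (a : ℝ)
    (hv : v ∈ Set.Icc (0 : Fin k → ℝ) 1) (h0 : 0 ≤ a) (h1 : a ≤ 1) :
    Fin.snoc v a ∈ Set.Icc (0 : Fin (k+1) → ℝ) 1 := by
  rw [Set.mem_Icc] at hv ⊢
  obtain ⟨hv0, hv1⟩ := hv
  rw [Pi.le_def] at hv0 hv1
  constructor <;> rw [Pi.le_def] <;> intro i <;>
    induction i using Fin.lastCases <;>
    simp only [Fin.snoc_last, Fin.snoc_castSucc, Pi.zero_apply, Pi.one_apply]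
  · exact h0
  · simpa using hv0 _
  · exact h1
  · simpa using hv1 _

lemma snoc_le_of {k : ℕ} (v : Fin k → ℝ) (a : ℝ) (x : Fin (k+1) → ℝ)
    (h : ∀ i : Fin k, v i ≤ x i.castSucc) (ha : a ≤ x (Fin.last k)) :
    Fin.snoc v a ≤ x := by
  rw [Pi.le_def]
  intro i
  induction i using Fin.lastCases <;>
    simp only [Fin.snoc_last, Fin.snoc_castSucc]
  · exact ha
  · apply h

lemma le_snoc_of {k : ℕ} (v : Fin k → ℝ) (a : ℝ) (x : Fin (k+1) → ℝ)
    (h : ∀ i : Fin k, x i.castSucc ≤ v i) (ha : x (Fin.last k) ≤ a) :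
    x ≤ Fin.snoc v a := by
  rw [Pi.le_def]
  intro i
  induction i using Fin.lastCases <;>
    simp only [Fin.snoc_last, Fin.snoc_castSucc]
  · exact ha
  · apply h

lemma prod_snoc' {k : ℕ} (f : Fin k → ℝ) (a : ℝ) :
    ∏ i : Fin (k+1), Fin.snoc f a i = (∏ i, f i) * a := by
  rw [Fin.prod_univ_castSucc]
  simp

lemma mem_Icc_pointwise {k : ℕ} (v : Fin k → ℝ) (hv : v ∈ Set.Icc (0 : Fin k → ℝ) 1) :
    ∀ i, 0 ≤ v i ∧ v i ≤ 1 := by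
  rw [Set.mem_Icc] at hv
  obtain ⟨h0, h1⟩ := hv
  rw [Pi.le_def] at h0 h1
  intro i
  exact ⟨by simpa using h0 i, by simpa using h1 i⟩



lemma aux_cover (D : ℕ) (δ : ℝ) (hδ : 0 < δ) :
    ∃ Δ : Finset ((Fin (D+1) → ℝ) × (Fin (D+1) → ℝ)),
      (∀ p ∈ Δ, p.1 ∈ Set.Icc (0 : Fin (D+1) → ℝ) 1 ∧ p.2 ∈ Set.Icc (0 : Fin (D+1) → ℝ) 1) ∧
      (∀ x : Fin (D+1) → ℝ, (∀ i, x i ∈ Set.Ico (0:ℝ) 1) →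
        ∃ p ∈ Δ, p.1 ≤ x ∧ x ≤ p.2 ∧ (∏ i, p.2 i) - (∏ i, p.1 i) ≤ δ) ∧
      (Δ.card : ℝ) ≤ (2 * Real.exp 1)^D * (δ⁻¹+1)^(D+1) := by
  induction D generalizing δ with
  | zero =>
    classical
    set n : ℕ := ⌈1/δ⌉₊ with hn
    have hnpos : 0 < n := Nat.ceil_pos.mpr (by positivity)
    have hnR : (0:ℝ) < n := by exact_mod_cast hnpos
    have hle : 1/δ ≤ (n:ℝ) := Nat.le_ceil _
    set Δ₀ : Finset ((Fin 1 → ℝ) × (Fin 1 → ℝ)) := (Finset.range n).image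
      (fun j : ℕ => ((fun _ : Fin 1 => (j:ℝ)/n), (fun _ : Fin 1 => ((j:ℝ)+1)/n))) with hΔ₀
    refine ⟨Δ₀, ?_, ?_, ?_⟩
    · intro p hp
      obtain ⟨j, hj, rfl⟩ := Finset.mem_image.mp hp
      rw [Finset.mem_range] at hj
      have hjn : (j:ℝ) + 1 ≤ n := by exact_mod_cast hj
      constructor <;> rw [Set.mem_Icc] <;> constructor <;> intro i
      · show (0:ℝ) ≤ (j:ℝ)/n; positivity
      · show (j:ℝ)/n ≤ 1; rw [div_le_one hnR]; linarith
      · show (0:ℝ) ≤ ((j:ℝ)+1)/n; positivity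
      · show ((j:ℝ)+1)/n ≤ 1; rw [div_le_one hnR]; linarith
    · intro x hx
      have ht := Set.mem_Ico.mp (hx 0)
      set j := ⌊x 0 * n⌋₊ with hjdef
      have htn : 0 ≤ x 0 * n := mul_nonneg ht.1 hnR.le
      have hjn : j < n := by
        rw [hjdef, Nat.floor_lt htn]
        calc x 0 * n < 1 * n := by nlinarith [ht.2]
          _ = n := one_mul _
      have hj1 : (j:ℝ) ≤ x 0 * n := Nat.floor_le htn
      have hj2 : x 0 * n < j + 1 := Nat.lt_floor_add_one _
      refine ⟨_, Finset.mem_image.mpr ⟨j, Finset.mem_range.mpr hjn, rfl⟩, ?_, ?_, ?_⟩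
      · intro i
        have hi : i = 0 := Fin.eq_zero i
        rw [hi]
        show (j:ℝ)/n ≤ x 0
        rw [div_le_iff₀ hnR]; linarith
      · intro i
        have hi : i = 0 := Fin.eq_zero i
        rw [hi]
        show x 0 ≤ ((j:ℝ)+1)/n
        rw [le_div_iff₀ hnR]; linarith
      · show (∏ _i : Fin 1, ((j:ℝ)+1)/n) - (∏ _i : Fin 1, (j:ℝ)/n) ≤ δ
        rw [Fin.prod_univ_one, Fin.prod_univ_one]
        have h1n : ((j:ℝ)+1)/n - (j:ℝ)/n = 1/n := by field_simp; ring
        rw [h1n, div_le_iff₀ hnR]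
        rw [div_le_iff₀ hδ] at hle
        nlinarith
    · have hcN : Δ₀.card ≤ n := by
        rw [hΔ₀]
        exact le_trans Finset.card_image_le (le_of_eq (Finset.card_range n))
      have hclt : (n:ℝ) < 1/δ + 1 := Nat.ceil_lt_add_one (by positivity)
      have : (Δ₀.card : ℝ) ≤ (n:ℝ) := by exact_mod_cast hcN
      rw [pow_zero, one_mul, pow_one]
      rw [one_div] at hclt
      linarith
  | succ D ih =>
    classical
    by_cases hδ1 : 1 < δ
    · refine ⟨{((0 : Fin (D+2) → ℝ), (1 : Fin (D+2) → ℝ))}, ?_, ?_, ?_⟩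
      · intro p hp
        rw [Finset.mem_singleton] at hp
        subst hp
        exact ⟨Set.mem_Icc.mpr ⟨le_rfl, zero_le_one⟩, Set.mem_Icc.mpr ⟨zero_le_one, le_rfl⟩⟩
      · intro x hx
        refine ⟨_, Finset.mem_singleton_self _, ?_, ?_, ?_⟩
        · intro i; exact (Set.mem_Ico.mp (hx i)).1
        · intro i; exact le_of_lt (Set.mem_Ico.mp (hx i)).2
        · show (∏ _i : Fin (D+2), (1:ℝ)) - (∏ _i : Fin (D+2), (0:ℝ)) ≤ δ
          rw [Finset.prod_const, Finset.prod_const, one_pow, zero_pow (by simp)]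
          linarith
      · rw [Finset.card_singleton]
        have he : (2:ℝ) ≤ Real.exp 1 := by
          have := Real.add_one_le_exp (1:ℝ); linarith
        have h1 : (1:ℝ) ≤ 2*Real.exp 1 := by linarith
        have h2 : (1:ℝ) ≤ δ⁻¹+1 := by
          have : (0:ℝ) < δ⁻¹ := by positivity
          linarith
        have b1 : (1:ℝ) ≤ (2*Real.exp 1)^(D+1) := one_le_pow₀ h1
        have b2 : (1:ℝ) ≤ (δ⁻¹+1)^(D+2) := one_le_pow₀ h2
        push_cast
        nlinarith
    · push_neg at hδ1
      set n : ℕ := ⌈((D:ℝ)+2)/δ⌉₊ with hn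
      have hnpos : 0 < n := Nat.ceil_pos.mpr (by positivity)
      have hnR : (0:ℝ) < n := by exact_mod_cast hnpos
      have hge : ((D:ℝ)+2)/δ ≤ n := Nat.le_ceil _
      have hlt : (n:ℝ) < ((D:ℝ)+2)/δ + 1 :=
        Nat.ceil_lt_add_one (by positivity)
      have hnδ : (D:ℝ)+2 ≤ n*δ := by
        rw [div_le_iff₀ hδ] at hge; linarith
      have hnδ2 : (n:ℝ)*δ ≤ (D:ℝ)+3 := by
        have h := mul_lt_mul_of_pos_right hlt hδ
        rw [add_mul, div_mul_cancel₀ _ (ne_of_gt hδ), one_mul] at h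
        linarith
      set c : ℝ := n*δ - 1 with hcdef
      have hc1 : (D:ℝ)+1 ≤ c := by rw [hcdef]; linarith
      have hcpos : (0:ℝ) < c := by
        have : (0:ℝ) ≤ (D:ℝ) := Nat.cast_nonneg D
        linarith
      choose Δ' hA hB hC using fun j : ℕ => ih (c/((j:ℝ)+1)) (div_pos hcpos (by positivity))
      set Δ : Finset ((Fin (D+2) → ℝ) × (Fin (D+2) → ℝ)) :=
        (Finset.range n).biUnion (fun j => (Δ' j).image
          (fun q => (Fin.snoc q.1 ((j:ℝ)/n), Fin.snoc q.2 (((j:ℝ)+1)/n)))) with hΔ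
      refine ⟨Δ, ?_, ?_, ?_⟩
      · intro p hp
        rw [hΔ] at hp
        obtain ⟨j, hj, hp2⟩ := Finset.mem_biUnion.mp hp
        obtain ⟨q, hq, rfl⟩ := Finset.mem_image.mp hp2
        rw [Finset.mem_range] at hj
        have hjn : (j:ℝ) + 1 ≤ n := by exact_mod_cast hj
        obtain ⟨hq1I, hq2I⟩ := hA j q hq
        constructor
        · exact snoc_mem_Icc q.1 _ hq1I (by positivity) (by rw [div_le_one hnR]; linarith)
        · exact snoc_mem_Icc q.2 _ hq2I (by positivity) (by rw [div_le_one hnR]; linarith)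
      · intro x hx
        have hxt := Set.mem_Ico.mp (hx (Fin.last (D+1)))
        have htn : 0 ≤ x (Fin.last (D+1)) * n := mul_nonneg hxt.1 hnR.le
        set j := ⌊x (Fin.last (D+1)) * n⌋₊ with hjdef
        have hjn : j < n := by
          rw [hjdef, Nat.floor_lt htn]
          calc x (Fin.last (D+1)) * n < 1 * n := by nlinarith [hxt.2]
            _ = n := one_mul _
        have hj1 : (j:ℝ) ≤ x (Fin.last (D+1))*n := Nat.floor_le htn
        have hj2 : x (Fin.last (D+1))*n < j+1 := Nat.lt_floor_add_one _
        obtain ⟨q, hqmem, hq1, hq2, hq3⟩ := hB j (fun i => x i.castSucc)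
          (fun i => hx _)
        refine ⟨(Fin.snoc q.1 ((j:ℝ)/n), Fin.snoc q.2 (((j:ℝ)+1)/n)), ?_, ?_, ?_, ?_⟩
        · rw [hΔ]
          exact Finset.mem_biUnion.mpr ⟨j, Finset.mem_range.mpr hjn,
            Finset.mem_image.mpr ⟨q, hqmem, rfl⟩⟩
        · exact snoc_le_of q.1 _ x (fun i => hq1 i)
            (by rw [div_le_iff₀ hnR]; linarith)
        · exact le_snoc_of q.2 _ x (fun i => hq2 i)
            (by rw [le_div_iff₀ hnR]; linarith)
        · show (∏ i : Fin (D+2), Fin.snoc q.2 (((j:ℝ)+1)/n) i)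
            - (∏ i : Fin (D+2), Fin.snoc q.1 ((j:ℝ)/n) i) ≤ δ
          rw [prod_snoc', prod_snoc']
          have hq1I := mem_Icc_pointwise q.1 (hA j q hqmem).1
          set P1 := ∏ i, q.1 i with hP1
          set P2 := ∏ i, q.2 i with hP2
          have h01 : 0 ≤ P1 := Finset.prod_nonneg fun i _ => (hq1I i).1
          have hP11 : P1 ≤ 1 := Finset.prod_le_one (fun i _ => (hq1I i).1) (fun i _ => (hq1I i).2)
          have hkey : P2 * (((j:ℝ)+1)/n) - P1 * ((j:ℝ)/n)
              = (((j:ℝ)+1)/n) * (P2 - P1) + (1/n)*P1 := by ring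
          have hb1 : (((j:ℝ)+1)/n) * (P2 - P1) ≤ (((j:ℝ)+1)/n) * (c/((j:ℝ)+1)) :=
            mul_le_mul_of_nonneg_left hq3 (by positivity)
          have hb2 : (((j:ℝ)+1)/n) * (c/((j:ℝ)+1)) = c/n := by
            have hj0 : ((j:ℝ)+1) ≠ 0 := by positivity
            field_simp
          have hb3 : (1/(n:ℝ))*P1 ≤ 1/n := by
            calc (1/(n:ℝ))*P1 ≤ (1/(n:ℝ))*1 := mul_le_mul_of_nonneg_left hP11 (by positivity)
              _ = 1/n := mul_one _
          have hb4 : c/(n:ℝ) = δ - 1/n := by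
            rw [hcdef]
            field_simp
          rw [hkey]
          rw [hb2, hb4] at hb1
          linarith
      · have hNat : Δ.card ≤ ∑ j ∈ Finset.range n, (Δ' j).card := by
          rw [hΔ]
          exact le_trans Finset.card_biUnion_le
            (Finset.sum_le_sum fun j _ => Finset.card_image_le)
        have hcast : (Δ.card : ℝ) ≤ ∑ j ∈ Finset.range n, ((Δ' j).card : ℝ) := by
          calc (Δ.card : ℝ) ≤ ((∑ j ∈ Finset.range n, (Δ' j).card : ℕ) : ℝ) := by
                exact_mod_cast hNat
            _ = ∑ j ∈ Finset.range n, ((Δ' j).card : ℝ) := by push_cast; rfl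
        refine le_trans hcast ?_
        have hterm : ∀ j : ℕ, ((Δ' j).card : ℝ)
            ≤ (2*Real.exp 1)^D * ((c + j + 1)^(D+1) / c^(D+1)) := by
          intro j
          refine le_trans (hC j) ?_
          have hj0 : ((j:ℝ)+1) ≠ 0 := by positivity
          have hc0 : c ≠ 0 := ne_of_gt hcpos
          have he : (c/((j:ℝ)+1))⁻¹ + 1 = (c + j + 1)/c := by
            field_simp
            ring
          rw [he, div_pow]
        refine le_trans (Finset.sum_le_sum fun j _ => hterm j) ?_
        rw [← Finset.mul_sum, ← Finset.sum_div]
        have hsum := sum_shift_pow_le (D+1) c hcpos.le n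
        have hDpos : (0:ℝ) < (D:ℝ)+2 := by positivity
        have hsum2 : ∑ j ∈ Finset.range n, (c + (j:ℝ) + 1)^(D+1)
            ≤ ((n:ℝ)*(1+δ))^(D+2) / ((D:ℝ)+2) := by
          rw [le_div_iff₀ hDpos]
          have hcn : c + (n:ℝ) + 1 = (n:ℝ)*(1+δ) := by rw [hcdef]; ring
          push_cast at hsum
          calc (∑ j ∈ Finset.range n, (c + (j:ℝ) + 1)^(D+1)) * ((D:ℝ)+2)
              = ((D:ℝ)+1+1) * ∑ j ∈ Finset.range n, (c + (j:ℝ) + 1)^(D+1) := by ring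
            _ ≤ (c + (n:ℝ) + 1)^(D+1+1) := hsum
            _ = ((n:ℝ)*(1+δ))^(D+2) := by rw [hcn]
        have hkey2 : ((n:ℝ)*δ)^(D+2) ≤ 2*Real.exp 1*((D:ℝ)+2)*c^(D+1) := by
          have hki := key_ineq (D+1) (by omega) ((n:ℝ)*δ)
            (by push_cast; linarith) (by push_cast; linarith)
          push_cast at hki
          calc ((n:ℝ)*δ)^(D+2) = ((n:ℝ)*δ)^(D+1+1) := by norm_num
            _ ≤ 2*Real.exp 1*((D:ℝ)+1+1)*((n:ℝ)*δ-1)^(D+1) := hki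
            _ = 2*Real.exp 1*((D:ℝ)+2)*c^(D+1) := by rw [hcdef]; ring
        have hcpow : (0:ℝ) < c^(D+1) := pow_pos hcpos _
        have hδpow : (0:ℝ) < δ^(D+2) := pow_pos hδ _
        have hstep1 : (∑ j ∈ Finset.range n, (c + (j:ℝ) + 1)^(D+1)) / c^(D+1)
            ≤ ((n:ℝ)*(1+δ))^(D+2) / (((D:ℝ)+2) * c^(D+1)) := by
          rw [← div_div]
          exact (div_le_div_iff_of_pos_right hcpow).mpr hsum2
        have hres : ((n:ℝ)*(1+δ))^(D+2) / (((D:ℝ)+2) * c^(D+1))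
            ≤ (2*Real.exp 1 * (1+δ)^(D+2)) / δ^(D+2) := by
          rw [div_le_div_iff₀ (by positivity) hδpow]
          calc ((n:ℝ)*(1+δ))^(D+2) * δ^(D+2)
              = ((n:ℝ)*δ)^(D+2) * (1+δ)^(D+2) := by
                rw [← mul_pow, ← mul_pow]
                ring_nf
            _ ≤ (2*Real.exp 1*((D:ℝ)+2)*c^(D+1)) * (1+δ)^(D+2) :=
                mul_le_mul_of_nonneg_right hkey2 (by positivity)
            _ = 2*Real.exp 1 * (1+δ)^(D+2) * (((D:ℝ)+2) * c^(D+1)) := by ring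
        have hfin : δ⁻¹ + 1 = (1+δ)/δ := by
          field_simp
        calc (2*Real.exp 1)^D * ((∑ j ∈ Finset.range n, (c + (j:ℝ) + 1)^(D+1)) / c^(D+1))
            ≤ (2*Real.exp 1)^D * (((n:ℝ)*(1+δ))^(D+2) / (((D:ℝ)+2) * c^(D+1))) :=
              mul_le_mul_of_nonneg_left hstep1 (by positivity)
          _ ≤ (2*Real.exp 1)^D * ((2*Real.exp 1 * (1+δ)^(D+2)) / δ^(D+2)) :=
              mul_le_mul_of_nonneg_left hres (by positivity)
          _ = (2*Real.exp 1)^(D+1) * (δ⁻¹+1)^(D+2) := by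
              rw [hfin, div_pow, pow_succ]
              ring


/-- For any dimension `d ≥ 1` and any `δ > 0` there exists a `δ`-bracketing cover `Δ`
of `[0,1)^d` with `|Δ| ≤ (1/2)(2e)^d (δ⁻¹+1)^d`. -/
theorem delta_bracketing_cover_card (d : ℕ) (hd : 1 ≤ d) (δ : ℝ) (hδ : 0 < δ) :
    ∃ Δ : Finset ((Fin d → ℝ) × (Fin d → ℝ)),
      (∀ p ∈ Δ, p.1 ∈ Set.Icc (0 : Fin d → ℝ) 1 ∧ p.2 ∈ Set.Icc (0 : Fin d → ℝ) 1) ∧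
      (∀ x ∈ Set.pi Set.univ fun _ : Fin d => Set.Ico (0:ℝ) 1,
        ∃ p ∈ Δ, p.1 ≤ x ∧ x ≤ p.2 ∧
          volume (anchoredBox p.2 \ anchoredBox p.1) ≤ ENNReal.ofReal δ) ∧
      (Δ.card : ℝ) ≤ (1/2) * (2 * Real.exp 1)^d * (δ⁻¹ + 1)^d := by
  obtain ⟨D, rfl⟩ : ∃ D, d = D + 1 := ⟨d - 1, by omega⟩
  obtain ⟨Δ, hbounds, hcover, hcard⟩ := aux_cover D δ hδ
  refine ⟨Δ, hbounds, ?_, ?_⟩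
  · intro x hx
    have hx' : ∀ i, x i ∈ Set.Ico (0:ℝ) 1 := fun i => Set.mem_pi.mp hx i (Set.mem_univ i)
    obtain ⟨p, hp, h1, h2, h3⟩ := hcover x hx'
    refine ⟨p, hp, h1, h2, ?_⟩
    have h0 : ∀ i, 0 ≤ p.1 i := fun i => (mem_Icc_pointwise p.1 (hbounds p hp).1 i).1
    rw [volume_anchored_diff p.1 p.2 h0 (le_trans h1 h2)]
    exact ENNReal.ofReal_le_ofReal h3
  · refine le_trans hcard ?_
    have he : (2:ℝ) ≤ Real.exp 1 := by
      have := Real.add_one_le_exp (1:ℝ); linarith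
    have h2e : (0:ℝ) ≤ 2*Real.exp 1 := by linarith
    have hX : (0:ℝ) ≤ (δ⁻¹+1)^(D+1) := by positivity
    have hmain : (2*Real.exp 1)^D ≤ (1/2)*(2*Real.exp 1)^(D+1) := by
      rw [pow_succ]
      nlinarith [pow_nonneg h2e D]
    exact mul_le_mul_of_nonneg_right hmain hX
end

section
/- Let $d \geq 1$, $h \geq 0$, and let $K \subseteq [0,1)^d$ be a finite union of axis-parallel boxes all of whose corner coordinates are of the form $2^{-(h+2+\lceil\log_2 d\rceil)} a$ with $a \in \{0,\ldots,2^{h+2+\lceil\log_2 d\rceil}\}$. Let $x_1$ be uniformly distributed on $[0,1)^d$ and define $x_n = (\langle 2^{n-1} x_{1,i}\rangle)_{i=1,\ldots,d}$, where $\langle\cdot\rangle$ denotes the fractional part. Let $f_K(x) = \mathbf{1}_K(x) - \lambda(K)$. Then for any indices $n_1 < n_2 < \cdots < n_k$ with $n_{l+1} - n_l \geq h + 2 + \lceil\log_2 d\rceil$ for all $l$, the random variables $f_K(x_{n_1}),\ldots,f_K(x_{n_k})$ are mutually independent. -/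
open MeasureTheory Set ProbabilityTheory
open scoped Pointwise

namespace DblAux

/-- Coordinatewise doubling-power map. -/
noncomputable def Dmap (d r : ℕ) : (Fin d → ℝ) → (Fin d → ℝ) := fun ω i => Int.fract (2^r * ω i)

def cube (d : ℕ) : Set (Fin d → ℝ) := Set.pi Set.univ fun _ => Set.Ico (0:ℝ) 1

def dbox (d s : ℕ) (a b : Fin d → ℕ) : Set (Fin d → ℝ) :=
  Set.pi Set.univ fun i => Set.Ico ((a i : ℝ)/2^s) ((b i : ℝ)/2^s)

lemma measurable_Dmap (d r : ℕ) : Measurable (Dmap d r) :=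
  measurable_pi_lambda _ fun i => ((measurable_pi_apply i).const_mul _).fract

lemma Dmap_mem_cube (d r : ℕ) (ω : Fin d → ℝ) : Dmap d r ω ∈ cube d := by
  intro i _
  exact ⟨Int.fract_nonneg _, Int.fract_lt_one _⟩

lemma Dmap_preimage_cube (d r : ℕ) : Dmap d r ⁻¹' cube d = univ :=
  eq_univ_of_forall fun ω => Dmap_mem_cube d r ω

lemma fract_pow_mul_fract (r : ℕ) (y : ℝ) :
    Int.fract ((2:ℝ)^r * Int.fract y) = Int.fract ((2:ℝ)^r * y) := by
  have h : (2:ℝ)^r * Int.fract y = 2^r * y - ((2^r * ⌊y⌋ : ℤ) : ℝ) := by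
    rw [Int.fract]; push_cast; ring
  rw [h, Int.fract_sub_intCast]

lemma Dmap_comp (d r s : ℕ) (ω : Fin d → ℝ) :
    Dmap d r (Dmap d s ω) = Dmap d (r + s) ω := by
  funext i
  simp only [Dmap]
  rw [fract_pow_mul_fract, ← mul_assoc, ← pow_add]

lemma measurableSet_dbox (d s : ℕ) (a b : Fin d → ℕ) : MeasurableSet (dbox d s a b) :=
  MeasurableSet.univ_pi fun i => measurableSet_Ico

lemma measurableSet_cube (d : ℕ) : MeasurableSet (cube d) :=
  MeasurableSet.univ_pi fun i => measurableSet_Ico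

lemma volume_cube (d : ℕ) : volume (cube d) = 1 := by
  rw [cube, volume_pi_pi]
  simp [Real.volume_Ico]

lemma cube_eq_dbox (d : ℕ) : cube d = dbox d 0 (fun _ => 0) (fun _ => 1) := by
  simp [cube, dbox]

/-- The key affine description of a level-`r` cell intersected with `Dmap⁻¹ B`. -/
lemma cell_inter_eq_image (d r : ℕ) (c : Fin d → ℕ) {B : Set (Fin d → ℝ)} (hB : B ⊆ cube d) :
    dbox d r c (fun i => c i + 1) ∩ Dmap d r ⁻¹' B
      = (fun i => ((c i : ℝ))/2^r) +ᵥ (((2:ℝ)^r)⁻¹ • B) := by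
  have hr : (0:ℝ) < 2^r := by positivity
  ext x
  simp only [mem_inter_iff, mem_preimage, mem_vadd_set, mem_smul_set]
  constructor
  · rintro ⟨hx, hxB⟩
    refine ⟨((2:ℝ)^r)⁻¹ • Dmap d r x, ⟨Dmap d r x, hxB, rfl⟩, ?_⟩
    funext i
    show (c i:ℝ)/2^r + ((2:ℝ)^r)⁻¹ * Int.fract ((2:ℝ)^r * x i) = x i
    have hxi := hx i (mem_univ i)
    simp only [mem_Ico] at hxi
    have h1 : (c i : ℝ) ≤ 2^r * x i := by
      rw [div_le_iff₀ hr] at hxi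
      linarith [hxi.1]
    have h2 : 2^r * x i < (c i : ℝ) + 1 := by
      have := hxi.2
      rw [lt_div_iff₀ hr] at this
      push_cast at this
      linarith
    have hfl : ⌊(2:ℝ)^r * x i⌋ = (c i : ℤ) := by
      rw [Int.floor_eq_iff]
      constructor
      · exact_mod_cast h1
      · push_cast; exact h2
    rw [← Int.self_sub_floor, hfl]
    push_cast
    field_simp
    ring
  · rintro ⟨z, ⟨y, hyB, rfl⟩, rfl⟩
    have hyc : ∀ i, 0 ≤ y i ∧ y i < 1 := by
      intro i
      have := hB hyB i (mem_univ i)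
      simpa using this
    have hxval : ∀ i, ((fun i => ((c i : ℝ))/2^r) +ᵥ ((2:ℝ)^r)⁻¹ • y) i
        = (c i + y i) / 2^r := by
      intro i
      show (c i:ℝ)/2^r + ((2:ℝ)^r)⁻¹ * y i = _
      field_simp
    constructor
    · intro i _
      rw [hxval i]
      simp only [mem_Ico]
      push_cast
      constructor
      · gcongr
        linarith [(hyc i).1]
      · gcongr
        linarith [(hyc i).2]
    · show Dmap d r _ ∈ B
      have : Dmap d r ((fun i => ((c i : ℝ))/2^r) +ᵥ ((2:ℝ)^r)⁻¹ • y) = y := by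
        funext i
        simp only [Dmap, hxval i]
        rw [mul_div_cancel₀ _ (ne_of_gt hr), Int.fract_natCast_add,
          Int.fract_eq_self.2 ⟨(hyc i).1, (hyc i).2⟩]
      rw [this]
      exact hyB
lemma volume_cell_inter (d r : ℕ) (c : Fin d → ℕ) {B : Set (Fin d → ℝ)}
    (hB : B ⊆ cube d) :
    volume (dbox d r c (fun i => c i + 1) ∩ Dmap d r ⁻¹' B)
      = ENNReal.ofReal (((2:ℝ)^r)⁻¹ ^ d) * volume B := by
  rw [cell_inter_eq_image d r c hB, measure_vadd, Measure.addHaar_smul]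
  congr 2
  rw [Module.finrank_fin_fun, abs_of_nonneg (by positivity)]

lemma dbox_eq_biUnion (d s r : ℕ) (hsr : s ≤ r) (a b : Fin d → ℕ) :
    dbox d s a b = ⋃ c ∈ Fintype.piFinset (fun i : Fin d => Finset.Ico (a i * 2^(r-s)) (b i * 2^(r-s))),
      dbox d r c (fun i => c i + 1) := by
  have hr : (0:ℝ) < 2^r := by positivity
  have hs2 : (0:ℝ) < 2^s := by positivity
  have hrs : (0:ℝ) < 2^(r-s) := by positivity
  have hpow : (2:ℝ)^(r-s) * 2^s = 2^r := by
    rw [← pow_add, Nat.sub_add_cancel hsr]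
  ext x
  simp only [mem_iUnion, exists_prop, Fintype.mem_piFinset, Finset.mem_Ico]
  constructor
  · intro hx
    have hx' : ∀ i, (a i : ℝ) ≤ 2^s * x i ∧ 2^s * x i < b i := by
      intro i
      have h := hx i (mem_univ i)
      simp only [mem_Ico] at h
      rw [div_le_iff₀ hs2, lt_div_iff₀ hs2] at h
      constructor <;> linarith [h.1, h.2]
    have hx0 : ∀ i, 0 ≤ 2^r * x i := by
      intro i
      have h1 : (0:ℝ) ≤ 2^s * x i := le_trans (Nat.cast_nonneg _) (hx' i).1
      have : (2:ℝ)^r * x i = 2^(r-s) * (2^s * x i) := by rw [← mul_assoc, hpow]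
      rw [this]
      positivity
    refine ⟨fun i => ⌊2^r * x i⌋₊, fun i => ⟨?_, ?_⟩, ?_⟩
    · rw [Nat.le_floor_iff (hx0 i)]
      push_cast
      have h2 := mul_le_mul_of_nonneg_left (hx' i).1 (le_of_lt hrs)
      rw [← mul_assoc, hpow] at h2
      nlinarith
    · rw [Nat.floor_lt (hx0 i)]
      push_cast
      have h2 := mul_lt_mul_of_pos_left (hx' i).2 hrs
      rw [← mul_assoc, hpow] at h2
      nlinarith
    · intro i _
      simp only [mem_Ico]
      constructor
      · rw [div_le_iff₀ hr]
        have := Nat.floor_le (hx0 i)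
        linarith [this]
      · rw [lt_div_iff₀ hr]
        have := Nat.lt_floor_add_one ((2:ℝ)^r * x i)
        push_cast
        linarith
  · rintro ⟨c, hc, hcx⟩
    intro i _
    have h1 : (c i : ℝ)/2^r ≤ x i ∧ x i < ((c i : ℝ) + 1)/2^r := by
      have h := hcx i (mem_univ i)
      simp only [mem_Ico] at h
      push_cast at h
      exact h
    have ha : ((a i * 2^(r-s) : ℕ) : ℝ) ≤ c i := Nat.cast_le.2 (hc i).1
    have hb : ((c i : ℝ) + 1) ≤ (b i * 2^(r-s) : ℕ) := by
      have : c i + 1 ≤ b i * 2^(r-s) := (hc i).2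
      exact_mod_cast this
    simp only [mem_Ico]
    constructor
    · rw [div_le_iff₀ hs2]
      push_cast at ha
      have h2 : (c i : ℝ)/2^r ≤ x i := h1.1
      rw [div_le_iff₀ hr] at h2
      have h3 := mul_le_mul_of_nonneg_left h2 (le_of_lt (inv_pos.2 hrs))
      -- messy; do directly
      have key : (a i : ℝ) * 2^r ≤ (c i : ℝ) * 2^s := by nlinarith
      nlinarith
    · rw [lt_div_iff₀ hs2]
      push_cast at hb
      have h2 : x i < ((c i : ℝ) + 1)/2^r := h1.2
      rw [lt_div_iff₀ hr] at h2
      nlinarith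

lemma cells_disjoint (d r : ℕ) {c c' : Fin d → ℕ} (hne : c ≠ c') :
    Disjoint (dbox d r c (fun i => c i + 1)) (dbox d r c' (fun i => c' i + 1)) := by
  have hr : (0:ℝ) < 2^r := by positivity
  rw [Set.disjoint_left]
  intro x hx hx'
  apply hne
  funext i
  have h1 := hx i (mem_univ i)
  have h2 := hx' i (mem_univ i)
  simp only [mem_Ico] at h1 h2
  obtain ⟨h1a, h1b⟩ := h1
  obtain ⟨h2a, h2b⟩ := h2
  rw [div_le_iff₀ hr] at h1a h2a
  rw [lt_div_iff₀ hr] at h1b h2b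
  push_cast at h1a h1b h2a h2b
  have e1 : (c i : ℝ) < c' i + 1 := by nlinarith
  have e2 : (c' i : ℝ) < c i + 1 := by nlinarith
  have e1' : c i < c' i + 1 := by exact_mod_cast e1
  have e2' : c' i < c i + 1 := by exact_mod_cast e2
  omega

lemma box_mixing (d s r : ℕ) (hsr : s ≤ r) (a b : Fin d → ℕ) {B : Set (Fin d → ℝ)}
    (hBm : MeasurableSet B) (hB : B ⊆ cube d) :
    volume (dbox d s a b ∩ Dmap d r ⁻¹' B) = volume (dbox d s a b) * volume B := by
  classical
  set F := Fintype.piFinset (fun i : Fin d => Finset.Ico (a i * 2^(r-s)) (b i * 2^(r-s))) with hF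
  have hdisj : (↑F : Set (Fin d → ℕ)).PairwiseDisjoint
      (fun c => dbox d r c (fun i => c i + 1) ∩ Dmap d r ⁻¹' B) := by
    intro c _ c' _ hne
    exact (cells_disjoint d r hne).mono inf_le_left inf_le_left
  have hmeas : ∀ c ∈ F, MeasurableSet (dbox d r c (fun i => c i + 1) ∩ Dmap d r ⁻¹' B) :=
    fun c _ => (measurableSet_dbox d r c _).inter (hBm.preimage (measurable_Dmap d r))
  have key : ∀ (B' : Set (Fin d → ℝ)), MeasurableSet B' → B' ⊆ cube d →
      volume (dbox d s a b ∩ Dmap d r ⁻¹' B')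
        = F.card * (ENNReal.ofReal (((2:ℝ)^r)⁻¹ ^ d) * volume B') := by
    intro B' hBm' hB'
    rw [dbox_eq_biUnion d s r hsr a b, iUnion₂_inter]
    rw [measure_biUnion_finset ?hd ?hm]
    case hd =>
      intro c _ c' _ hne
      exact (cells_disjoint d r hne).mono inf_le_left inf_le_left
    case hm => exact fun c _ => (measurableSet_dbox d r c _).inter (hBm'.preimage (measurable_Dmap d r))
    rw [Finset.sum_congr rfl (fun c _ => volume_cell_inter d r c hB')]
    rw [Finset.sum_const, nsmul_eq_mul]
  have h1 := key B hBm hB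
  have h2 := key (cube d) (measurableSet_cube d) (subset_refl _)
  rw [Dmap_preimage_cube, inter_univ, volume_cube, mul_one] at h2
  rw [h1, h2]
  ring

lemma union_cells_mixing (d m r : ℕ) (hmr : m ≤ r) (C : Finset (Fin d → ℕ))
    {B : Set (Fin d → ℝ)} (hBm : MeasurableSet B) (hB : B ⊆ cube d) :
    volume ((⋃ c ∈ C, dbox d m c (fun i => c i + 1)) ∩ Dmap d r ⁻¹' B)
      = volume (⋃ c ∈ C, dbox d m c (fun i => c i + 1)) * volume B := by
  classical
  rw [iUnion₂_inter]
  have e1 : volume (⋃ c ∈ C, (dbox d m c (fun i => c i + 1) ∩ Dmap d r ⁻¹' B))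
      = ∑ c ∈ C, volume (dbox d m c (fun i => c i + 1) ∩ Dmap d r ⁻¹' B) :=
    measure_biUnion_finset (fun c _ c' _ hne =>
        (cells_disjoint d m hne).mono inf_le_left inf_le_left)
      (fun c _ => (measurableSet_dbox d m c _).inter (hBm.preimage (measurable_Dmap d r)))
  have e2 : volume (⋃ c ∈ C, dbox d m c (fun i => c i + 1))
      = ∑ c ∈ C, volume (dbox d m c (fun i => c i + 1)) :=
    measure_biUnion_finset (fun c _ c' _ hne => cells_disjoint d m hne)
      (fun c _ => measurableSet_dbox d m c _)
  rw [e1, e2, Finset.sum_mul]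
  exact Finset.sum_congr rfl fun c _ => box_mixing d m r hmr c _ hBm hB

lemma K_eq_cells (d m : ℕ) (S : Finset ((Fin d → ℕ) × (Fin d → ℕ))) :
    (⋃ p ∈ S, dbox d m p.1 p.2)
      = ⋃ c ∈ S.biUnion (fun p => Fintype.piFinset fun i => Finset.Ico (p.1 i) (p.2 i)),
        dbox d m c (fun i => c i + 1) := by
  classical
  rw [Finset.set_biUnion_biUnion]
  refine iUnion₂_congr fun p _ => ?_
  have := dbox_eq_biUnion d m m le_rfl p.1 p.2
  simpa [Nat.sub_self] using this

lemma K_mixing (d m r : ℕ) (hmr : m ≤ r) (K : Set (Fin d → ℝ))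
    (S : Finset ((Fin d → ℕ) × (Fin d → ℕ)))
    (hK : K = ⋃ p ∈ S, dbox d m p.1 p.2)
    {B : Set (Fin d → ℝ)} (hBm : MeasurableSet B) (hB : B ⊆ cube d) :
    volume (K ∩ Dmap d r ⁻¹' B) = volume K * volume B := by
  classical
  rw [hK, K_eq_cells d m S]
  exact union_cells_mixing d m r hmr _ hBm hB

lemma cube_mixing (d r : ℕ) {B : Set (Fin d → ℝ)} (hBm : MeasurableSet B)
    (hB : B ⊆ cube d) :
    volume (cube d ∩ Dmap d r ⁻¹' B) = volume B := by
  have h := box_mixing d 0 r (Nat.zero_le r) (fun _ => 0) (fun _ => 1) hBm hB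
  rw [← cube_eq_dbox] at h
  rw [h, volume_cube, one_mul]

lemma main_induction (d m : ℕ) (K : Set (Fin d → ℝ)) (hKm : MeasurableSet K)
    (hKc : K ⊆ cube d)
    (hmix : ∀ r, m ≤ r → ∀ B : Set (Fin d → ℝ), MeasurableSet B → B ⊆ cube d →
      volume (K ∩ Dmap d r ⁻¹' B) = volume K * volume B) :
    ∀ (N : ℕ) {ι : Type*} (T : Finset ι) (p : ι → ℕ), T.card = N →
      (∀ l ∈ T, ∀ l' ∈ T, l ≠ l' → p l + m ≤ p l' ∨ p l' + m ≤ p l) →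
      volume (cube d ∩ ⋂ l ∈ T, Dmap d (p l) ⁻¹' K) = (volume K)^N := by
  intro N
  induction N with
  | zero =>
    intro ι T p hcard _
    rw [Finset.card_eq_zero] at hcard
    subst hcard
    simp [volume_cube]
  | succ N ih =>
    intro ι T p hcard hgap
    classical
    have hne : T.Nonempty := by
      rw [← Finset.card_pos, hcard]; omega
    obtain ⟨l₀, hl₀, hmin⟩ := Finset.exists_min_image T p hne
    set T' := T.erase l₀ with hT'
    have hcard' : T'.card = N := by
      rw [hT', Finset.card_erase_of_mem hl₀, hcard]
      omega
    have hge : ∀ l ∈ T', p l₀ + m ≤ p l := by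
      intro l hl
      have hlT := Finset.mem_of_mem_erase hl
      have hlne : l ≠ l₀ := Finset.ne_of_mem_erase hl
      have hm := hmin l hlT
      rcases hgap l hlT l₀ hl₀ hlne with h | h <;> omega
    set Y := cube d ∩ ⋂ l ∈ T', Dmap d (p l - (p l₀ + m)) ⁻¹' K with hY
    have hYm : MeasurableSet Y := (measurableSet_cube d).inter
      (MeasurableSet.biInter (Finset.countable_toSet T')
        (fun l _ => hKm.preimage (measurable_Dmap d _)))
    have hYc : Y ⊆ cube d := inter_subset_left
    have hBm : MeasurableSet (K ∩ Dmap d m ⁻¹' Y) :=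
      hKm.inter (hYm.preimage (measurable_Dmap d m))
    have hsplit : cube d ∩ ⋂ l ∈ T, Dmap d (p l) ⁻¹' K
        = cube d ∩ Dmap d (p l₀) ⁻¹' (K ∩ Dmap d m ⁻¹' Y) := by
      ext x
      simp only [mem_inter_iff, mem_iInter, mem_preimage, hY]
      constructor
      · rintro ⟨hxc, hxK⟩
        refine ⟨hxc, hxK l₀ hl₀, Dmap_mem_cube d _ _, ?_⟩
        intro l hl
        rw [Dmap_comp, Dmap_comp]
        have : p l - (p l₀ + m) + m + p l₀ = p l := by
          have := hge l hl; omega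
        rw [this]
        exact hxK l (Finset.mem_of_mem_erase hl)
      · rintro ⟨hxc, hxK0, _, hxK⟩
        refine ⟨hxc, ?_⟩
        intro l hl
        by_cases hll : l = l₀
        · subst hll; exact hxK0
        · have hl' : l ∈ T' := Finset.mem_erase.2 ⟨hll, hl⟩
          have h2 := hxK l hl'
          rw [Dmap_comp, Dmap_comp] at h2
          have : p l - (p l₀ + m) + m + p l₀ = p l := by
            have := hge l hl'; omega
          rwa [this] at h2
    rw [hsplit, cube_mixing d (p l₀) hBm (fun x hx => hKc hx.1)]
    rw [hmix m le_rfl Y hYm hYc]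
    rw [ih T' (fun l => p l - (p l₀ + m)) hcard' ?_]
    · ring
    · intro l hl l' hl' hne'
      have h1 := hge l hl
      have h2 := hge l' hl'
      have h3 := hgap l (Finset.mem_of_mem_erase hl) l' (Finset.mem_of_mem_erase hl') hne'
      show p l - (p l₀ + m) + m ≤ p l' - (p l₀ + m) ∨ p l' - (p l₀ + m) + m ≤ p l - (p l₀ + m)
      omega

lemma K_subset_cube (d m : ℕ) (S : Finset ((Fin d → ℕ) × (Fin d → ℕ)))
    (hS : ∀ p ∈ S, ∀ i, p.1 i ≤ 2^m ∧ p.2 i ≤ 2^m) :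
    (⋃ p ∈ S, dbox d m p.1 p.2) ⊆ cube d := by
  intro x hx
  simp only [mem_iUnion, exists_prop] at hx
  obtain ⟨p, hp, hxp⟩ := hx
  intro i _
  have hq := hxp i (mem_univ i)
  simp only [mem_Ico] at hq ⊢
  have hm : (0:ℝ) < 2^m := by positivity
  constructor
  · exact le_trans (by positivity) hq.1
  · have hb : ((p.2 i : ℝ)) ≤ 2^m := by exact_mod_cast (hS p hp i).2
    calc x i < (p.2 i : ℝ)/2^m := hq.2
    _ ≤ (2:ℝ)^m/2^m := by gcongr
    _ = 1 := div_self (ne_of_gt hm)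

end DblAux

/-- Independence of `f_K(x_{n_1}), …, f_K(x_{n_k})` for the coordinatewise doubling
orbit of a uniform point, where `K` is a finite union of dyadic boxes of resolution
`2^{-(h+2+⌈log₂ d⌉)}` and the indices are separated by at least `h+2+⌈log₂ d⌉`. -/
theorem doubling_indicators_indep (d : ℕ) (hd : 1 ≤ d) (h : ℕ)
    (K : Set (Fin d → ℝ)) (S : Finset ((Fin d → ℕ) × (Fin d → ℕ)))
    (hS : ∀ p ∈ S, ∀ i, p.1 i ≤ 2^(h + 2 + Nat.clog 2 d) ∧ p.2 i ≤ 2^(h + 2 + Nat.clog 2 d))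
    (hK : K = ⋃ p ∈ S, Set.pi Set.univ fun i =>
        Set.Ico ((p.1 i : ℝ) / 2^(h + 2 + Nat.clog 2 d)) ((p.2 i : ℝ) / 2^(h + 2 + Nat.clog 2 d)))
    (k : ℕ) (n : Fin k → ℕ) (hn1 : ∀ l, 1 ≤ n l) (hmono : StrictMono n)
    (hgap : ∀ l l' : Fin k, l < l' → n l + (h + 2 + Nat.clog 2 d) ≤ n l') :
    iIndepFun
      (fun l (ω : Fin d → ℝ) =>
        K.indicator (fun _ => (1:ℝ)) (fun i => Int.fract (2^(n l - 1) * ω i))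
          - (volume K).toReal)
      (volume.restrict (Set.pi Set.univ fun _ : Fin d => Set.Ico (0:ℝ) 1)) := by
  classical
  set m := h + 2 + Nat.clog 2 d with hm
  have hK' : K = ⋃ p ∈ S, DblAux.dbox d m p.1 p.2 := hK
  have hKm : MeasurableSet K := by
    rw [hK']
    exact MeasurableSet.biUnion S.countable_toSet fun p _ => DblAux.measurableSet_dbox d m _ _
  have hKc : K ⊆ DblAux.cube d := hK' ▸ DblAux.K_subset_cube d m S hS
  have hmix : ∀ r, m ≤ r → ∀ B : Set (Fin d → ℝ), MeasurableSet B → B ⊆ DblAux.cube d →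
      volume (K ∩ DblAux.Dmap d r ⁻¹' B) = volume K * volume B :=
    fun r hr B hBm hB => DblAux.K_mixing d m r hr K S hK' hBm hB
  set μ := volume.restrict (DblAux.cube d) with hμ
  haveI hprob : IsProbabilityMeasure μ :=
    ⟨by rw [hμ, Measure.restrict_apply_univ, DblAux.volume_cube]⟩
  have smeas : ∀ l : Fin k, MeasurableSet (DblAux.Dmap d (n l - 1) ⁻¹' K) :=
    fun l => hKm.preimage (DblAux.measurable_Dmap d _)
  have key : ∀ T : Finset (Fin k),
      volume (DblAux.cube d ∩ ⋂ l ∈ T, DblAux.Dmap d (n l - 1) ⁻¹' K)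
        = (volume K)^T.card := by
    intro T
    refine DblAux.main_induction d m K hKm hKc hmix T.card T (fun l => n l - 1) rfl ?_
    intro l hl l' hl' hne
    show n l - 1 + m ≤ n l' - 1 ∨ n l' - 1 + m ≤ n l - 1
    rcases lt_or_gt_of_ne hne with hlt | hlt
    · have := hgap l l' hlt
      have := hn1 l
      left; omega
    · have := hgap l' l hlt
      have := hn1 l'
      right; omega
  have happ : ∀ (A : Set (Fin d → ℝ)), MeasurableSet A → μ A = volume (DblAux.cube d ∩ A) := by
    intro A hA
    rw [hμ, Measure.restrict_apply hA, inter_comm]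
  have hiset : iIndepSet (fun l => DblAux.Dmap d (n l - 1) ⁻¹' K) μ := by
    rw [iIndepSet_iff_meas_biInter smeas]
    intro T
    rw [happ _ (Finset.measurableSet_biInter T fun l _ => smeas l), key T]
    have hone : ∀ l ∈ T, μ (DblAux.Dmap d (n l - 1) ⁻¹' K) = volume K := by
      intro l _
      rw [happ _ (smeas l)]
      have h1 := key {l}
      simpa using h1
    rw [Finset.prod_congr rfl hone, Finset.prod_const]
  have hind := hiset.iIndepFun_indicator (β := ℝ) (m := inferInstance)
  have hcomp := hind.comp (fun _ (x:ℝ) => x - (volume K).toReal)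
    (fun _ => measurable_id.sub measurable_const)
  have heq : (fun l (ω : Fin d → ℝ) =>
      K.indicator (fun _ => (1:ℝ)) (fun i => Int.fract (2^(n l - 1) * ω i)) - (volume K).toReal)
      = fun l => (fun x : ℝ => x - (volume K).toReal) ∘
          ((DblAux.Dmap d (n l - 1) ⁻¹' K).indicator fun _ => (1:ℝ)) := by
    funext l ω
    simp only [Function.comp_apply]
    congr 1
  rw [heq]
  exact hcomp
end
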